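/- Let R be a commutative halidon ring with index m and primitive m-th root of unity ω, let G be a cyclic group of order m with generator g, and let u = ∑_{j=0}^{m−1} a_j g^j be an element of the group ring RG with associated elements λ_r = ∑_{j=0}^{m−1} a_j ω^{j·r} for r = 0,…,m−1. Then u is a unit of the group ring RG if and only if every λ_r is a unit of R. -/

import Mathlib

def IsPrimitiveHalidonRoot {R : Type*} [CommRing R] (m : ℕ) (ω : R) : Prop :=
  ω ^ m = 1 ∧ (∀ k : ℕ, 0 < k → k < m → ω ^ k ≠ 1) ∧
    ∀ k : ℕ, 0 < k → k < m → ∑ r ∈ Finset.range m, ω ^ (r * k) = 0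

/-- Let `R` be a commutative halidon ring with index `m` and primitive `m`-th root of
unity `ω`, let `G = ⟨g⟩` be cyclic of order `m`, and let `u = ∑_j a_j g^j ∈ RG` with
associated elements `λ_r = ∑_j a_j ω^{j r}`.  Then `u` is a unit of the group ring `RG`
iff every `λ_r` is a unit of `R`. -/
theorem groupRing_isUnit_iff {R G : Type*} [CommRing R] [Group G] [Fintype G]
    (m : ℕ) (hm : 0 < m) (ω : R) (hω : IsPrimitiveHalidonRoot m ω)
    (hmu : IsUnit (m : R))
    (g : G) (hg : ∀ x : G, x ∈ Subgroup.zpowers g) (hcard : Fintype.card G = m)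
    (a : ℕ → R) :
    IsUnit (∑ j ∈ Finset.range m, MonoidAlgebra.single (g ^ j) (a j)) ↔
      ∀ r < m, IsUnit (∑ j ∈ Finset.range m, a j * ω ^ (j * r)) := by
  classical
  obtain ⟨h1, h2, h3⟩ := hω
  have ho : orderOf g = m := by
    rw [orderOf_eq_card_of_forall_mem_zpowers hg, Nat.card_eq_fintype_card, hcard]
  have hgm : g ^ m = 1 := by rw [← ho]; exact pow_orderOf_eq_one g
  set ωi := ω ^ (m - 1) with hωi
  have hωωi : ω * ωi = 1 := by
    rw [hωi, ← pow_succ', Nat.sub_add_cancel hm, h1]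
  have hωim : ωi ^ m = 1 := by
    rw [hωi, ← pow_mul, mul_comm, pow_mul, h1, one_pow]
  have hωij : ∀ j : ℕ, ω ^ j * ωi ^ j = 1 := fun j => by
    rw [← mul_pow, hωωi, one_pow]
  have hωi_eq : ∀ j ≤ m, ωi ^ j = ω ^ (m - j) := by
    intro j hj
    have : ω ^ (m - j) * (ω ^ j * ωi ^ j) = ωi ^ j := by
      rw [← mul_assoc, ← pow_add, Nat.sub_add_cancel hj, h1, one_mul]
    rw [← this, hωij, mul_one]
  -- the (unnormalized) idempotents
  set E : ℕ → MonoidAlgebra R G := fun r =>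
    ∑ j ∈ Finset.range m, MonoidAlgebra.single (g ^ j) (ωi ^ (j * r)) with hE
  -- coefficient extraction at 1
  have hcoeff : ∀ b : ℕ → R,
      (∑ j ∈ Finset.range m, MonoidAlgebra.single (g ^ j) (b j)).coeff (1 : G) = b 0 := by
    intro b
    rw [MonoidAlgebra.coeff_sum, Finset.sum_apply']
    rw [Finset.sum_eq_single 0]
    · simp [MonoidAlgebra.coeff_single, Finsupp.single_apply]
    · intro j hj hj0
      have hjm : j < m := Finset.mem_range.mp hj
      have : g ^ j ≠ 1 := by
        intro hc
        have := orderOf_dvd_of_pow_eq_one hc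
        rw [ho] at this
        exact hj0 (Nat.eq_zero_of_dvd_of_lt this hjm)
      simp [MonoidAlgebra.coeff_single, Finsupp.single_apply, this]
    · intro h
      exact absurd (Finset.mem_range.mpr hm) h
  -- a shift lemma
  have hshift : ∀ F : ℕ → MonoidAlgebra R G, F m = F 0 →
      ∑ j ∈ Finset.range m, F (j + 1) = ∑ j ∈ Finset.range m, F j := by
    intro F hF
    have h1' := Finset.sum_range_succ' F m
    have h2' := Finset.sum_range_succ F m
    rw [h1', hF] at h2'
    exact add_right_cancel h2'
  -- generator step
  have hgenE : ∀ (r : ℕ) (c : R),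
      MonoidAlgebra.single g c * E r = MonoidAlgebra.single (1 : G) (c * ω ^ r) * E r := by
    intro r c
    rw [hE]
    rw [Finset.mul_sum, Finset.mul_sum]
    have lhs : ∀ j, MonoidAlgebra.single g c *
        MonoidAlgebra.single (g ^ j) (ωi ^ (j * r)) =
        MonoidAlgebra.single (g ^ (j + 1)) (c * ω ^ r * ωi ^ ((j + 1) * r)) := by
      intro j
      rw [MonoidAlgebra.single_mul_single, ← pow_succ']
      congr 1
      have : ω ^ r * ωi ^ ((j + 1) * r) = ωi ^ (j * r) := by
        rw [add_mul, one_mul, pow_add, mul_left_comm, hωij, mul_one]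
      rw [mul_assoc, this]
    simp_rw [lhs, MonoidAlgebra.single_mul_single, one_mul]
    exact hshift (fun j => MonoidAlgebra.single (g ^ j) (c * ω ^ r * ωi ^ (j * r)))
      (by
        have h4 : ωi ^ (m * r) = 1 := by rw [pow_mul, hωim, one_pow]
        simp [hgm, h4])
  -- powers of the generator
  have hpowE : ∀ (j r : ℕ) (c : R),
      MonoidAlgebra.single (g ^ j) c * E r =
        MonoidAlgebra.single (1 : G) (c * ω ^ (j * r)) * E r := by
    intro j r c
    induction j with
    | zero => simp
    | succ j ih =>
      have : MonoidAlgebra.single (g ^ (j + 1)) c =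
          MonoidAlgebra.single g (1 : R) * MonoidAlgebra.single (g ^ j) c := by
        rw [MonoidAlgebra.single_mul_single, ← pow_succ', one_mul]
      rw [this, mul_assoc, ih, ← mul_assoc, MonoidAlgebra.single_mul_single, mul_one, hgenE]
      congr 2
      rw [one_mul, add_mul, one_mul, pow_add, mul_assoc]
  -- multiplication by a general element
  have hmulE : ∀ (b : ℕ → R) (r : ℕ),
      (∑ j ∈ Finset.range m, MonoidAlgebra.single (g ^ j) (b j)) * E r =
        MonoidAlgebra.single (1 : G) (∑ j ∈ Finset.range m, b j * ω ^ (j * r)) * E r := by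
    intro b r
    rw [Finset.sum_mul]
    simp_rw [hpowE]
    rw [← Finset.sum_mul]
    congr 1
    exact (map_sum (MonoidAlgebra.singleAddHom (1 : G)) _ _).symm
  -- sum of the idempotents
  have hsumE : ∑ r ∈ Finset.range m, E r = MonoidAlgebra.single (1 : G) (m : R) := by
    rw [hE]
    rw [Finset.sum_comm]
    have inner : ∀ j ∈ Finset.range m,
        ∑ r ∈ Finset.range m, MonoidAlgebra.single (g ^ j) (ωi ^ (j * r)) =
          MonoidAlgebra.single (g ^ j) (∑ r ∈ Finset.range m, ωi ^ (j * r)) := by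
      intro j _
      exact (map_sum (MonoidAlgebra.singleAddHom (g ^ j)) _ _).symm
    rw [Finset.sum_congr rfl inner]
    rw [Finset.sum_eq_single 0]
    · simp
    · intro j hj hj0
      have hjm : j < m := Finset.mem_range.mp hj
      have hj0' : 0 < j := Nat.pos_of_ne_zero hj0
      have : ∑ r ∈ Finset.range m, ωi ^ (j * r) = 0 := by
        have hle : j ≤ m := le_of_lt hjm
        have : ∀ r, ωi ^ (j * r) = ω ^ (r * (m - j)) := by
          intro r
          rw [pow_mul, hωi_eq j hle, ← pow_mul, Nat.mul_comm]
        simp_rw [this]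
        exact h3 (m - j) (Nat.sub_pos_of_lt hjm) (by omega)
      rw [this]; simp
    · intro h
      exact absurd (Finset.mem_range.mpr hm) h
  -- commutation of `single 1 c` with everything
  have hc1 : ∀ (c : R) (x : MonoidAlgebra R G),
      MonoidAlgebra.single (1 : G) c * x = x * MonoidAlgebra.single (1 : G) c :=
    fun c x => MonoidAlgebra.single_one_comm c x
  set u : MonoidAlgebra R G := ∑ j ∈ Finset.range m, MonoidAlgebra.single (g ^ j) (a j)
    with hu
  set Λ : ℕ → R := fun r => ∑ j ∈ Finset.range m, a j * ω ^ (j * r) with hΛ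
  constructor
  · -- forward
    intro huu r hr
    obtain ⟨w, hw1, hw2⟩ := isUnit_iff_exists.mp huu
    -- write w as a sum of singles
    have hinj : Set.InjOn (g ^ ·) (Set.Iio m) := by rw [← ho]; exact pow_injOn_Iio_orderOf
    have himg : (Finset.range m).image (g ^ ·) = Finset.univ := by
      apply Finset.eq_univ_of_card
      rw [Finset.card_image_of_injOn, Finset.card_range, hcard]
      intro x hx y hy
      exact hinj (Finset.mem_range.mp hx) (Finset.mem_range.mp hy)
    have hwrep : w = ∑ j ∈ Finset.range m, MonoidAlgebra.single (g ^ j) (w.coeff (g ^ j)) := by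
      have huniv : w = ∑ x ∈ Finset.univ, MonoidAlgebra.single x (w.coeff x) := by
        conv_lhs => rw [← MonoidAlgebra.sum_coeff_single w]
        rw [Finsupp.sum]
        refine Finset.sum_subset (Finset.subset_univ _) fun x _ hx => ?_
        rw [Finsupp.notMem_support_iff.mp hx]
        simp
      conv_lhs => rw [huniv, ← himg,
        Finset.sum_image fun x hx y hy =>
          hinj (Finset.mem_range.mp hx) (Finset.mem_range.mp hy)]
    set c : ℕ → R := fun j => w.coeff (g ^ j) with hc
    set Λ' : R := ∑ j ∈ Finset.range m, c j * ω ^ (j * r) with hΛ'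
    have key : E r = MonoidAlgebra.single (1 : G) (Λ' * Λ r) * E r := by
      calc E r = (u * w) * E r := by rw [hw1, one_mul]
        _ = u * (w * E r) := by rw [mul_assoc]
        _ = u * (MonoidAlgebra.single (1 : G) Λ' * E r) := by
            conv_lhs => rw [hwrep]
            rw [hmulE c r]
        _ = MonoidAlgebra.single (1 : G) Λ' * (u * E r) := by
            rw [← mul_assoc, ← hc1, mul_assoc]
        _ = MonoidAlgebra.single (1 : G) Λ' * (MonoidAlgebra.single (1 : G) (Λ r) * E r) := by
            rw [hu, hmulE a r]
        _ = MonoidAlgebra.single (1 : G) (Λ' * Λ r) * E r := by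
            rw [← mul_assoc, MonoidAlgebra.single_mul_single, one_mul]
    -- extract the coefficient at 1
    have hEcoeff : (E r).coeff (1 : G) = 1 := by
      rw [hE]
      have := hcoeff (fun j => ωi ^ (j * r))
      simpa using this
    have hRHS : (MonoidAlgebra.single (1 : G) (Λ' * Λ r) * E r).coeff (1 : G) = Λ' * Λ r := by
      rw [hE, Finset.mul_sum]
      simp_rw [MonoidAlgebra.single_mul_single, one_mul]
      have := hcoeff (fun j => Λ' * Λ r * ωi ^ (j * r))
      simpa using this
    have : (1 : R) = Λ' * Λ r := by
      rw [← hEcoeff]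
      conv_lhs => rw [key]
      exact hRHS
    exact IsUnit.of_mul_eq_one Λ' (by rw [mul_comm]; exact this.symm)
  · -- backward
    intro h
    have hch : ∀ r, ∃ d, r < m → Λ r * d = 1 := by
      intro r
      by_cases hr : r < m
      · obtain ⟨d, hd⟩ := (h r hr).exists_right_inv
        exact ⟨d, fun _ => hd⟩
      · exact ⟨0, fun hc => absurd hc hr⟩
    choose μ hμ using hch
    obtain ⟨n, hn⟩ := hmu.exists_right_inv
    set v : MonoidAlgebra R G :=
      MonoidAlgebra.single (1 : G) n *
        ∑ r ∈ Finset.range m, MonoidAlgebra.single (1 : G) (μ r) * E r with hv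
    have hT : ∀ x : MonoidAlgebra R G,
        (∑ r ∈ Finset.range m, MonoidAlgebra.single (1 : G) (μ r) * E r) * x =
        ∑ r ∈ Finset.range m, MonoidAlgebra.single (1 : G) (μ r) * (x * E r) → True := fun _ _ => trivial
    have huv : u * v = 1 := by
      have : u * v = MonoidAlgebra.single (1 : G) n *
          ∑ r ∈ Finset.range m, MonoidAlgebra.single (1 : G) (μ r) * (u * E r) := by
        rw [hv, ← mul_assoc, ← hc1 n u, mul_assoc]
        congr 1
        rw [Finset.mul_sum]
        refine Finset.sum_congr rfl fun r _ => ?_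
        rw [← mul_assoc, ← hc1 (μ r) u, mul_assoc]
      rw [this]
      have : ∀ r ∈ Finset.range m,
          MonoidAlgebra.single (1 : G) (μ r) * (u * E r) = E r := by
        intro r hr
        rw [hu, hmulE a r, ← mul_assoc, MonoidAlgebra.single_mul_single, one_mul,
          mul_comm (μ r), hμ r (Finset.mem_range.mp hr)]
        rw [← MonoidAlgebra.one_def, one_mul]
      rw [Finset.sum_congr rfl this, hsumE, MonoidAlgebra.single_mul_single, one_mul,
        mul_comm n, hn]
      exact MonoidAlgebra.one_def.symm
    -- v * u = u * v since everything in sight commutes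
    have hEu : ∀ r, E r * u = u * E r := by
      intro r
      rw [hE, hu, Finset.sum_mul_sum, Finset.sum_mul_sum]
      rw [Finset.sum_comm]
      refine Finset.sum_congr rfl fun j _ => Finset.sum_congr rfl fun k _ => ?_
      rw [MonoidAlgebra.single_mul_single, MonoidAlgebra.single_mul_single,
        pow_mul_comm, mul_comm (ωi ^ (k * r))]
    have hvu : v * u = 1 := by
      have hTu : (∑ r ∈ Finset.range m, MonoidAlgebra.single (1 : G) (μ r) * E r) * u
          = u * ∑ r ∈ Finset.range m, MonoidAlgebra.single (1 : G) (μ r) * E r := by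
        rw [Finset.sum_mul, Finset.mul_sum]
        refine Finset.sum_congr rfl fun r _ => ?_
        rw [mul_assoc, hEu r, ← mul_assoc, hc1 (μ r) u, mul_assoc]
      calc v * u
          = MonoidAlgebra.single (1 : G) n *
            ((∑ r ∈ Finset.range m, MonoidAlgebra.single (1 : G) (μ r) * E r) * u) := by
            rw [hv, mul_assoc]
        _ = MonoidAlgebra.single (1 : G) n *
            (u * ∑ r ∈ Finset.range m, MonoidAlgebra.single (1 : G) (μ r) * E r) := by
            rw [hTu]
        _ = u * (MonoidAlgebra.single (1 : G) n *
            ∑ r ∈ Finset.range m, MonoidAlgebra.single (1 : G) (μ r) * E r) := by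
            rw [← mul_assoc, ← mul_assoc, hc1 n u]
        _ = u * v := by rw [hv]
        _ = 1 := huv
    exact isUnit_iff_exists.mpr ⟨v, huv, hvu⟩
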